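/- Let f be a Boolean network without positive cycles. Then f has a fixed point if and only if f^⟨n⟩(x₀) = f^⟨n+1⟩(x₀), where x₀ = (0,…,0). Hence the existence of a fixed point can be decided by n+1 applications of f to any single initial state. -/

import Mathlib

open scoped Classical

abbrev BNState (n : ℕ) := Fin n → Bool

def posArc {n : ℕ} (f : BNState n → BNState n) (u v : Fin n) : Prop :=
  ∃ x : BNState n, x u = false ∧ f x v = false ∧ f (Function.update x u true) v = true

def negArc {n : ℕ} (f : BNState n → BNState n) (u v : Fin n) : Prop :=
  ∃ x : BNState n, x u = false ∧ f x v = true ∧ f (Function.update x u true) v = false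

def arcSign {n : ℕ} (f : BNState n → BNState n) (u v : Fin n) (s : ℤ) : Prop :=
  (s = 1 ∧ posArc f u v) ∨ (s = -1 ∧ negArc f u v)

/-- There is a cycle of positive sign in `G(f)` avoiding the vertex set `P`. -/
def hasPosCycleOutside {n : ℕ} (f : BNState n → BNState n) (P : Set (Fin n)) : Prop :=
  ∃ (m : ℕ) (v : Fin (m+1) → Fin n) (s : Fin (m+1) → ℤ),
    Function.Injective v ∧ (∀ i, v i ∉ P) ∧
    (∀ i, arcSign f (v i) (v (i+1)) (s i)) ∧ (∏ i, s i) = 1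

/-- There is a cycle (of any sign) in `G(f)` avoiding the vertex set `F`. -/
def hasCycleOutside {n : ℕ} (f : BNState n → BNState n) (F : Set (Fin n)) : Prop :=
  ∃ (m : ℕ) (v : Fin (m+1) → Fin n) (s : Fin (m+1) → ℤ),
    Function.Injective v ∧ (∀ i, v i ∉ F) ∧
    (∀ i, arcSign f (v i) (v (i+1)) (s i))

/-- `(IC f k).1` is the set `I_k(f)` of components fixed at iteration `k`,
and `(IC f k).2` records the constant values `c_v` (arbitrary off `I_k(f)`). -/
noncomputable def IC {n : ℕ} (f : BNState n → BNState n) :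
    ℕ → Set (Fin n) × (Fin n → Bool)
  | 0 => (∅, fun _ => false)
  | k+1 =>
    let I := (IC f k).1
    let c := (IC f k).2
    let g : BNState n → BNState n := fun x => f (fun u => if u ∈ I then c u else x u)
    ({v | ∀ x y, g x v = g y v}, fun v => g (fun _ => false) v)

/-- The network `f^{I_k}` obtained from `f` by clamping the components of `I_k(f)`. -/
noncomputable def fI {n : ℕ} (f : BNState n → BNState n) (k : ℕ) :
    BNState n → BNState n :=
  fun x => f (fun u => if u ∈ (IC f k).1 then (IC f k).2 u else x u)

/-- Partial evaluation `f^u`: update only component `u`. -/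
def seqStep {n : ℕ} (f : BNState n → BNState n) (u : Fin n) (x : BNState n) : BNState n :=
  Function.update x u (f x u)

/-- Sequential update `f^π = f^{π_n} ∘ ⋯ ∘ f^{π_1}`. -/
def seqUpdate {n : ℕ} (f : BNState n → BNState n) (π : Equiv.Perm (Fin n))
    (x : BNState n) : BNState n :=
  (List.ofFn (fun i => π i)).foldl (fun y u => seqStep f u y) x

lemma arc_of_flip {n : ℕ} (f : BNState n → BNState n) (z : BNState n) (u v : Fin n)
    (h : f z v ≠ f (Function.update z u (! z u)) v) :
    arcSign f u v (if z u = f z v then 1 else -1) := by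
  have flipval : ∀ {a b : Bool}, a ≠ b → b = !a := by decide
  cases hz : z u with
  | false =>
    simp only [hz, Bool.not_false] at h
    have hval := flipval h
    cases hf : f z v with
    | false =>
      rw [if_pos rfl]
      refine Or.inl ⟨rfl, z, hz, hf, ?_⟩
      rw [hval, hf]; rfl
    | true =>
      rw [if_neg (by simp)]
      refine Or.inr ⟨rfl, z, hz, hf, ?_⟩
      rw [hval, hf]; rfl
  | true =>
    simp only [hz, Bool.not_true] at h
    set z₀ := Function.update z u false with hz₀
    have hzz : Function.update z₀ u true = z := by
      rw [hz₀, Function.update_idem, ← hz, Function.update_eq_self]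
    have hz₀u : z₀ u = false := Function.update_self u false z
    have hval := flipval h
    cases hf : f z v with
    | false =>
      rw [if_neg (by simp)]
      refine Or.inr ⟨rfl, z₀, hz₀u, ?_, ?_⟩
      · rw [hval, hf]; rfl
      · rw [hzz]; exact hf
    | true =>
      rw [if_pos rfl]
      refine Or.inl ⟨rfl, z₀, hz₀u, ?_, ?_⟩
      · rw [hval, hf]; rfl
      · rw [hzz]; exact hf

lemma exists_arc_aux {n : ℕ} (f : BNState n → BNState n) :
    ∀ (k : ℕ) (a b : BNState n) (v : Fin n),
      (Finset.univ.filter (fun u => a u ≠ b u)).card ≤ k →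
      f a v ≠ f b v →
      ∃ u, a u ≠ b u ∧ arcSign f u v (if a u = f a v then 1 else -1) := by
  intro k
  induction k with
  | zero =>
    intro a b v hcard hne
    exfalso
    apply hne
    have : a = b := by
      funext u
      by_contra hu
      have : u ∈ Finset.univ.filter (fun u => a u ≠ b u) := by simp [hu]
      have := Finset.card_pos.mpr ⟨u, this⟩
      omega
    rw [this]
  | succ k ih =>
    intro a b v hcard hne
    have hab : a ≠ b := fun e => hne (by rw [e])
    obtain ⟨u₀, hu₀⟩ : ∃ u, a u ≠ b u := by
      by_contra h
      push_neg at h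
      exact hab (funext h)
    by_cases hflip : f a v = f (Function.update a u₀ (! a u₀)) v
    · set a' := Function.update a u₀ (! a u₀) with ha'
      have ha'u₀ : a' u₀ = b u₀ := by
        rw [ha', Function.update_self]
        cases h1 : a u₀ <;> cases h2 : b u₀ <;> simp_all
      have hsub : (Finset.univ.filter (fun u => a' u ≠ b u)) ⊆
          (Finset.univ.filter (fun u => a u ≠ b u)).erase u₀ := by
        intro u hu
        simp only [Finset.mem_filter, Finset.mem_univ, true_and] at hu
        have hne' : u ≠ u₀ := by
          intro e; rw [e, ha'u₀] at hu; exact hu rfl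
        rw [Finset.mem_erase]
        refine ⟨hne', ?_⟩
        simp only [Finset.mem_filter, Finset.mem_univ, true_and]
        rwa [ha', Function.update_of_ne hne'] at hu
      have hmem : u₀ ∈ Finset.univ.filter (fun u => a u ≠ b u) := by simp [hu₀]
      have hcard' : (Finset.univ.filter (fun u => a' u ≠ b u)).card ≤ k := by
        have := Finset.card_le_card hsub
        rw [Finset.card_erase_of_mem hmem] at this
        omega
      have hne' : f a' v ≠ f b v := by rwa [← hflip]
      obtain ⟨u, hu, harc⟩ := ih a' b v hcard' hne'
      have hneu : u ≠ u₀ := by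
        intro e; rw [e, ha'u₀] at hu; exact hu rfl
      have hau : a' u = a u := by rw [ha', Function.update_of_ne hneu]
      refine ⟨u, by rwa [hau] at hu, ?_⟩
      rwa [hau, ← hflip] at harc
    · exact ⟨u₀, hu₀, arc_of_flip f a u₀ v hflip⟩

lemma exists_arc {n : ℕ} (f : BNState n → BNState n) (a b : BNState n) (v : Fin n)
    (hne : f a v ≠ f b v) :
    ∃ u, a u ≠ b u ∧ arcSign f u v (if a u = f a v then 1 else -1) :=
  exists_arc_aux f _ a b v le_rfl hne

lemma chain_step {n : ℕ} (f : BNState n → BNState n) (y : BNState n) (hy : f y = y)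
    (t : ℕ) (v : Fin n) (hv : f^[t+1] (fun _ => false) v ≠ y v) :
    ∃ u, f^[t] (fun _ => false) u ≠ y u ∧
      arcSign f u v (if y u = y v then 1 else -1) := by
  set a := f^[t] (fun _ => false : BNState n) with ha
  have hfa : f a v = f^[t+1] (fun _ => false) v := by
    rw [ha, ← Function.iterate_succ_apply' f t]
  have hfb : f y v = y v := by rw [hy]
  have hne : f a v ≠ f y v := by rw [hfa, hfb]; exact hv
  obtain ⟨u, hu, harc⟩ := exists_arc f a y v hne
  refine ⟨u, hu, ?_⟩
  have hcond : (if a u = f a v then (1:ℤ) else -1) = (if y u = y v then 1 else -1) := by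
    have h1 : f a v ≠ y v := by rw [hfa]; exact hv
    cases h2 : a u <;> cases h3 : y u <;> cases h4 : f a v <;> cases h5 : y v <;>
      simp_all
  rwa [hcond] at harc

lemma chain {n : ℕ} (f : BNState n → BNState n) (y : BNState n) (hy : f y = y) :
    ∀ (t : ℕ) (v : Fin n), f^[t] (fun _ => false) v ≠ y v →
      ∃ c : ℕ → Fin n, c t = v ∧
        (∀ j, j ≤ t → f^[j] (fun _ => false) (c j) ≠ y (c j)) ∧
        (∀ j, j < t → arcSign f (c j) (c (j+1))
            (if y (c j) = y (c (j+1)) then 1 else -1)) := by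
  intro t
  induction t with
  | zero =>
    intro v hv
    refine ⟨fun _ => v, rfl, ?_, ?_⟩
    · intro j hj; interval_cases j; exact hv
    · intro j hj; omega
  | succ t ih =>
    intro v hv
    obtain ⟨u, hu, harc⟩ := chain_step f y hy t v hv
    obtain ⟨c, hct, hvals, harcs⟩ := ih u hu
    refine ⟨fun j => if j = t + 1 then v else c j, by simp, ?_, ?_⟩
    · intro j hj
      by_cases hj' : j = t + 1
      · simpa [hj'] using hv
      · have : j ≤ t := by omega
        simpa [hj'] using hvals j this
    · intro j hj
      by_cases hj' : j = t
      · have h1 : j ≠ t + 1 := by omega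
        have h2 : j + 1 = t + 1 := by rw [hj']
        simpa [h1, h2, hj', hct] using harc
      · have hjt : j < t := by omega
        have : j ≠ t + 1 := by omega
        have : j + 1 ≠ t + 1 := by omega
        simpa [show j ≠ t + 1 by omega, show j + 1 ≠ t + 1 by omega, hj']
          using harcs j hjt

/-- A BN without positive cycles has a fixed point iff
`f^⟨n⟩(0) = f^⟨n+1⟩(0)` where `0 = (0,…,0)`. -/
theorem fixedPoint_iff_iterate_zero {n : ℕ} (f : BNState n → BNState n)
    (hpos : ¬ hasPosCycleOutside f (∅ : Set (Fin n))) :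
    (∃ y : BNState n, f y = y) ↔
      f^[n] (fun _ => false) = f^[n+1] (fun _ => false) := by
  constructor
  · rintro ⟨y, hy⟩
    have hfix : f^[n] (fun _ => false) = y := by
      by_contra hne
      obtain ⟨v, hv⟩ : ∃ v, f^[n] (fun _ => false) v ≠ y v := Function.ne_iff.mp hne
      obtain ⟨c, hcn, hvals, harcs⟩ := chain f y hy n v hv
      obtain ⟨i, j, hij, heqf⟩ := Fintype.exists_ne_map_eq_of_card_lt
        (fun i : Fin (n+1) => c i.val) (by simp)
      obtain ⟨i', j', hlt, hjn, heq⟩ : ∃ i' j' : ℕ, i' < j' ∧ j' ≤ n ∧ c i' = c j' := by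
        rcases lt_or_gt_of_ne hij with h | h
        · exact ⟨i.val, j.val, h, Nat.lt_succ_iff.mp j.isLt, heqf⟩
        · exact ⟨j.val, i.val, h, Nat.lt_succ_iff.mp i.isLt, heqf.symm⟩
      have hQ : ∃ d, 0 < d ∧ ∃ a, a + d ≤ n ∧ c a = c (a + d) :=
        ⟨j' - i', by omega, i', by omega,
          by rw [show i' + (j' - i') = j' by omega]; exact heq⟩
      set d₀ := Nat.find hQ with hd₀
      obtain ⟨hd₀pos, i₀, hi₀n, hc0⟩ := Nat.find_spec hQ
      have hmin : ∀ d, d < d₀ → ¬(0 < d ∧ ∃ a, a + d ≤ n ∧ c a = c (a + d)) :=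
        fun d hd => Nat.find_min hQ hd
      set m := d₀ - 1 with hm
      have hm1 : m + 1 = d₀ := by omega
      set w : Fin (m+1) → Fin n := fun k => c (i₀ + k.val) with hw
      set hsgn : Fin (m+1) → ℤ := fun k => (if y (w k) = true then (1:ℤ) else -1) with hh
      set s : Fin (m+1) → ℤ := fun k => hsgn k * hsgn (k+1) with hs
      have hshift : ∀ k : Fin (m+1), w (k+1) = c (i₀ + k.val + 1) := by
        intro k
        by_cases hk : k = Fin.last m
        · have h1 : (k + 1 : Fin (m+1)).val = 0 := by
            rw [Fin.val_add_one, if_pos hk]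
          have h2 : k.val = m := by rw [hk]; rfl
          simp only [hw, h1, h2, Nat.add_zero]
          rw [show i₀ + m + 1 = i₀ + d₀ by omega]
          exact hc0
        · have h1 : (k + 1 : Fin (m+1)).val = k.val + 1 := by
            rw [Fin.val_add_one, if_neg hk]
          simp only [hw, h1]
          rw [show i₀ + (k.val + 1) = i₀ + k.val + 1 from rfl]
      have hinj : Function.Injective w := by
        intro k l hkl
        by_contra hne'
        have hvne : k.val ≠ l.val := fun e => hne' (Fin.ext e)
        have hkm : k.val < m + 1 := k.isLt
        have hlm : l.val < m + 1 := l.isLt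
        rcases Nat.lt_or_ge k.val l.val with h | h
        · refine hmin (l.val - k.val) (by omega) ⟨by omega, i₀ + k.val, by omega, ?_⟩
          rw [show i₀ + k.val + (l.val - k.val) = i₀ + l.val by omega]
          exact hkl
        · have h' : l.val < k.val := by omega
          refine hmin (k.val - l.val) (by omega) ⟨by omega, i₀ + l.val, by omega, ?_⟩
          rw [show i₀ + l.val + (k.val - l.val) = i₀ + k.val by omega]
          exact hkl.symm
      have harc : ∀ k : Fin (m+1), arcSign f (w k) (w (k+1)) (s k) := by
        intro k
        have hkm : k.val < m + 1 := k.isLt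
        have hk : i₀ + k.val < n := by omega
        have hthis := harcs (i₀ + k.val) hk
        rw [← hshift k] at hthis
        have hs' : s k = (if y (w k) = y (w (k+1)) then 1 else -1) := by
          simp only [hs, hh]
          cases hy1 : y (w k) <;> cases hy2 : y (w (k+1)) <;> simp
        rw [hs']
        exact hthis
      have hprod : (∏ k, s k) = 1 := by
        have h1 : (∏ k : Fin (m+1), s k) = (∏ k, hsgn k) * (∏ k, hsgn (k+1)) := by
          simp only [hs]; rw [Finset.prod_mul_distrib]
        have h2 : (∏ k : Fin (m+1), hsgn (k+1)) = ∏ k, hsgn k :=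
          Fintype.prod_equiv (Equiv.addRight (1 : Fin (m+1))) _ _
            (fun k => by rw [Equiv.coe_addRight])
        rw [h1, h2, ← Finset.prod_mul_distrib]
        apply Finset.prod_eq_one
        intro k _
        simp only [hh]
        split <;> norm_num
      exact hpos ⟨m, w, s, hinj, fun i => Set.notMem_empty _, harc, hprod⟩
    rw [hfix, Function.iterate_succ_apply', hfix, hy]
  · intro h
    refine ⟨f^[n] (fun _ => false), ?_⟩
    rw [← Function.iterate_succ_apply' f n, ← h]
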